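/- arXiv:1310.1842 — 4 statements merged into one kernel-verified Lean document; each statement's English description precedes it below -/
import Mathlib

section
/- (Proposition, property (iii).) Let t ∈ H be nonzero and let φ be a group automorphism of H with induced ring automorphism Φ of R. Let α ∈ R be irreducible, supported on ℤt, and with at least two elements in its support, and let β ∈ R be nonzero and supported on ℤt. Then Γ_{α,Φ}(β) = Γ_{α,id}(β), where id denotes the identity ring automorphism of R. -/
/-!
Context: `H n = Fin n →₀ ℤ` is the free abelian group of rank `n`, and
`R n = AddMonoidAlgebra ℤ (H n)` is its integral group ring, i.e. the ring of
Laurent polynomials in `n` variables over `ℤ`.  For `h ∈ H n`, the basis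
element `[h]` of `R n` is `AddMonoidAlgebra.single h 1`.
-/

noncomputable section

/-- `H n` is the free abelian group of rank `n`. -/
abbrev H (n : ℕ) : Type := Fin n →₀ ℤ

/-- `R n` is the integral group ring `ℤ[H n]`. -/
abbrev R (n : ℕ) : Type := AddMonoidAlgebra ℤ (H n)

/-- The ring automorphism `Φ` of `R n` induced by a group automorphism `φ` of `H n`;
it is determined by `Φ [h] = [φ h]`. -/
def inducedAut {n : ℕ} (φ : H n ≃+ H n) : RingAut (R n) :=
  (AddMonoidAlgebra.domCongr ℤ ℤ φ).toRingEquiv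

/-- The conjugation `C : x ↦ x̄`, the ring automorphism of `R n` induced by the
group automorphism `h ↦ -h` of `H n`. -/
def conjC (n : ℕ) : RingAut (R n) := inducedAut (AddEquiv.neg (H n))

/-- The augmentation ring homomorphism `ε : R n →+* ℤ`, with `ε [h] = 1` for all `h`. -/
def aug (n : ℕ) : R n →+* ℤ :=
  AddMonoidAlgebra.liftNCRingHom (RingHom.id ℤ) 1 (fun _ _ => Commute.all _ _)

/-- `x ∈ R n` is supported on `ℤ t`: every element of its support is an integer
multiple of `t`. -/
def SupportedOn {n : ℕ} (t : H n) (x : R n) : Prop :=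
  ∀ h ∈ x.coeff.support, ∃ k : ℤ, h = k • t

/-- The set of natural numbers `N` such that some product of `N` elements of `R n`,
each of which equals `Φ^m α` or `Φ^m ᾱ` for some integer `m`, divides `x`. -/
def GammaSet {n : ℕ} (α : R n) (Φ : RingAut (R n)) (x : R n) : Set ℕ :=
  {N | ∃ l : List (R n), l.length = N ∧
    (∀ y ∈ l, ∃ m : ℤ, y = (Φ ^ m) α ∨ y = (Φ ^ m) (conjC n α)) ∧ l.prod ∣ x}

/-- `Γ_{α,Φ}(x)`: the largest `N` in `GammaSet α Φ x`. -/
def Gamma {n : ℕ} (α : R n) (Φ : RingAut (R n)) (x : R n) : ℕ := sSup (GammaSet α Φ x)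

/-! ### Auxiliary lemmas -/

lemma inducedAut_apply {n : ℕ} (ψ : H n ≃+ H n) (x : R n) (h : H n) :
    (inducedAut ψ x).coeff h = x.coeff (ψ.symm h) :=
  AddMonoidAlgebra.coeff_domCongr (R := ℤ) ψ x h

lemma inducedAut_support {n : ℕ} (ψ : H n ≃+ H n) (x : R n) :
    (inducedAut ψ x).coeff.support = Finset.map (↑ψ : H n ≃ H n).toEmbedding x.coeff.support :=
  AddMonoidAlgebra.domCongr_support (R := ℤ) ψ x

/-- `inducedAut` as a monoid hom from `AddAut (H n)` to `RingAut (R n)`. -/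
def indHom (n : ℕ) : Multiplicative (AddAut (H n)) →* RingAut (R n) where
  toFun ψ := inducedAut (Multiplicative.toAdd ψ)
  map_one' := by
    apply RingEquiv.ext; intro x; apply AddMonoidAlgebra.ext; apply Finsupp.ext; intro h
    rw [inducedAut_apply]; rfl
  map_mul' ψ χ := by
    apply RingEquiv.ext; intro x; apply AddMonoidAlgebra.ext; apply Finsupp.ext; intro h
    show _ = ((inducedAut (Multiplicative.toAdd ψ)) ((inducedAut (Multiplicative.toAdd χ)) x)).coeff h
    rw [inducedAut_apply, inducedAut_apply, inducedAut_apply]; rfl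

lemma inducedAut_zpow {n : ℕ} (φ : H n ≃+ H n) (m : ℤ) :
    (inducedAut φ) ^ m = inducedAut (m • (show AddAut (H n) from φ) : AddAut (H n)) :=
  (map_zpow (indHom n) (Multiplicative.ofAdd (show AddAut (H n) from φ)) m).symm

lemma conjC_conjC {n : ℕ} (x : R n) : conjC n (conjC n x) = x := by
  apply AddMonoidAlgebra.ext; apply Finsupp.ext; intro h
  rw [conjC, inducedAut_apply, inducedAut_apply]
  norm_num

/-- If two automorphisms agree on the support of `γ`, the induced ring automorphisms
agree at `γ`. -/
lemma inducedAut_eq_of_agree {n : ℕ} {ψ χ : H n ≃+ H n} {γ : R n}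
    (hag : ∀ h ∈ γ.coeff.support, ψ h = χ h) : inducedAut ψ γ = inducedAut χ γ := by
  apply AddMonoidAlgebra.ext; apply Finsupp.ext; intro h
  rw [inducedAut_apply, inducedAut_apply]
  rcases eq_or_ne (γ.coeff (ψ.symm h)) 0 with h1 | h1
  · rcases eq_or_ne (γ.coeff (χ.symm h)) 0 with h2 | h2
    · rw [h1, h2]
    · have hm : χ.symm h ∈ γ.coeff.support := Finsupp.mem_support_iff.2 h2
      have hxx := hag _ hm
      have : ψ.symm h = χ.symm h := by
        apply ψ.injective
        rw [ψ.apply_symm_apply, hxx, χ.apply_symm_apply]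
      rw [this]
  · have hm : ψ.symm h ∈ γ.coeff.support := Finsupp.mem_support_iff.2 h1
    have hxx := hag _ hm
    have : χ.symm h = ψ.symm h := by
      apply χ.injective
      rw [χ.apply_symm_apply, ← hxx, ψ.apply_symm_apply]
    rw [this]

lemma inducedAut_eq_self {n : ℕ} {ψ : H n ≃+ H n} {γ : R n}
    (hag : ∀ h ∈ γ.coeff.support, ψ h = h) : inducedAut ψ γ = γ := by
  have h1 : inducedAut ψ γ = inducedAut (AddEquiv.refl (H n)) γ :=
    inducedAut_eq_of_agree (by simpa using hag)
  rw [h1]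
  apply AddMonoidAlgebra.ext; apply Finsupp.ext; intro h
  rw [inducedAut_apply]; rfl

lemma inducedAut_eq_conjC {n : ℕ} {ψ : H n ≃+ H n} {γ : R n}
    (hag : ∀ h ∈ γ.coeff.support, ψ h = -h) : inducedAut ψ γ = conjC n γ := by
  rw [conjC]
  exact inducedAut_eq_of_agree (by simpa using hag)

/-! #### Leading-term lemmas -/

/-- If every pair of support elements has `f`-value sum `< c`, the product has zero
coefficient at every `h₀` with `f h₀ = c`. -/
lemma mul_apply_eq_zero_of_lt {n : ℕ} (f : H n →+ ℤ) {y z : R n} {c : ℤ}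
    (hlt : ∀ a ∈ y.coeff.support, ∀ b ∈ z.coeff.support, f a + f b < c)
    {h0 : H n} (hh0 : f h0 = c) : (y * z).coeff h0 = 0 := by
  classical
  by_contra hne
  have hmem : h0 ∈ (y * z).coeff.support := Finsupp.mem_support_iff.2 hne
  have hmem2 := AddMonoidAlgebra.support_coeff_mul_subset y z hmem
  rw [Finset.mem_add] at hmem2
  obtain ⟨a, ha, b, hb, hab⟩ := hmem2
  have := hlt a ha b hb
  rw [← map_add, hab, hh0] at this
  exact lt_irrefl _ this

lemma coeff_ne_zero_of_ne {n : ℕ} {y : R n} (hy : y ≠ 0) : y.coeff ≠ 0 :=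
  fun h => hy (AddMonoidAlgebra.coeff_eq_zero.1 h)

/-- Leading-term lemma: the maximum of `f` over the support is additive on products. -/
lemma mul_exists_max {n : ℕ} (f : H n →+ ℤ) {y z : R n} (hy : y ≠ 0) (hz : z ≠ 0) :
    ∃ h ∈ (y * z).coeff.support,
      f h = y.coeff.support.sup' (Finsupp.support_nonempty_iff.2 (coeff_ne_zero_of_ne hy)) f
          + z.coeff.support.sup' (Finsupp.support_nonempty_iff.2 (coeff_ne_zero_of_ne hz)) f := by
  classical
  set My := y.coeff.support.sup' (Finsupp.support_nonempty_iff.2 (coeff_ne_zero_of_ne hy)) f with hMy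
  set Mz := z.coeff.support.sup' (Finsupp.support_nonempty_iff.2 (coeff_ne_zero_of_ne hz)) f with hMz
  set y1 : R n := AddMonoidAlgebra.ofCoeff (Finsupp.filter (fun h => f h = My) y.coeff) with hy1
  set y2 : R n := AddMonoidAlgebra.ofCoeff (Finsupp.filter (fun h => ¬ f h = My) y.coeff) with hy2
  set z1 : R n := AddMonoidAlgebra.ofCoeff (Finsupp.filter (fun h => f h = Mz) z.coeff) with hz1
  set z2 : R n := AddMonoidAlgebra.ofCoeff (Finsupp.filter (fun h => ¬ f h = Mz) z.coeff) with hz2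
  have hysum : y1 + y2 = y := by
    rw [hy1, hy2]; exact AddMonoidAlgebra.ext (Finsupp.filter_pos_add_filter_neg y.coeff _)
  have hzsum : z1 + z2 = z := by
    rw [hz1, hz2]; exact AddMonoidAlgebra.ext (Finsupp.filter_pos_add_filter_neg z.coeff _)
  have hs_y1 : y1.coeff.support = y.coeff.support.filter (fun h => f h = My) := by
    rw [hy1]; exact Finsupp.support_filter _ _
  have hs_y2 : y2.coeff.support = y.coeff.support.filter (fun h => ¬ f h = My) := by
    rw [hy2]; exact Finsupp.support_filter _ _
  have hs_z1 : z1.coeff.support = z.coeff.support.filter (fun h => f h = Mz) := by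
    rw [hz1]; exact Finsupp.support_filter _ _
  have hs_z2 : z2.coeff.support = z.coeff.support.filter (fun h => ¬ f h = Mz) := by
    rw [hz2]; exact Finsupp.support_filter _ _
  have hy1ne : y1 ≠ 0 := by
    suffices y1.coeff ≠ 0 from fun h => this (by rw [h]; rfl)
    obtain ⟨a, ha, hae⟩ := Finset.exists_mem_eq_sup' (Finsupp.support_nonempty_iff.2 (coeff_ne_zero_of_ne hy)) f
    rw [← Finsupp.support_nonempty_iff, hs_y1]
    exact ⟨a, Finset.mem_filter.2 ⟨ha, hae.symm⟩⟩
  have hz1ne : z1 ≠ 0 := by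
    suffices z1.coeff ≠ 0 from fun h => this (by rw [h]; rfl)
    obtain ⟨a, ha, hae⟩ := Finset.exists_mem_eq_sup' (Finsupp.support_nonempty_iff.2 (coeff_ne_zero_of_ne hz)) f
    rw [← Finsupp.support_nonempty_iff, hs_z1]
    exact ⟨a, Finset.mem_filter.2 ⟨ha, hae.symm⟩⟩
  have hprod : y1 * z1 ≠ 0 := mul_ne_zero hy1ne hz1ne
  obtain ⟨h0, hh0⟩ := Finsupp.support_nonempty_iff.2 (coeff_ne_zero_of_ne hprod)
  obtain ⟨a, ha, b, hb, hab⟩ := Finset.mem_add.1 (AddMonoidAlgebra.support_coeff_mul_subset y1 z1 hh0)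
  rw [hs_y1, Finset.mem_filter] at ha
  rw [hs_z1, Finset.mem_filter] at hb
  have hfh0 : f h0 = My + Mz := by rw [← hab, map_add, ha.2, hb.2]
  refine ⟨h0, ?_, hfh0⟩
  rw [Finsupp.mem_support_iff]
  have h12 : (y1 * z2).coeff h0 = 0 := by
    apply mul_apply_eq_zero_of_lt f _ hfh0
    intro a' ha' b' hb'
    rw [hs_y1, Finset.mem_filter] at ha'
    rw [hs_z2, Finset.mem_filter] at hb'
    have h1 : f b' < Mz := lt_of_le_of_ne (Finset.le_sup' f hb'.1) hb'.2
    have h2 : f a' = My := ha'.2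
    omega
  have h21 : (y2 * z1).coeff h0 = 0 := by
    apply mul_apply_eq_zero_of_lt f _ hfh0
    intro a' ha' b' hb'
    rw [hs_y2, Finset.mem_filter] at ha'
    rw [hs_z1, Finset.mem_filter] at hb'
    have h1 : f a' < My := lt_of_le_of_ne (Finset.le_sup' f ha'.1) ha'.2
    have h2 : f b' = Mz := hb'.2
    omega
  have h22 : (y2 * z2).coeff h0 = 0 := by
    apply mul_apply_eq_zero_of_lt f _ hfh0
    intro a' ha' b' hb'
    rw [hs_y2, Finset.mem_filter] at ha'
    rw [hs_z2, Finset.mem_filter] at hb'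
    have h1 : f a' < My := lt_of_le_of_ne (Finset.le_sup' f ha'.1) ha'.2
    have h2 : f b' ≤ Mz := Finset.le_sup' f hb'.1
    omega
  have hexpand : (y * z).coeff h0
      = (y1 * z1).coeff h0 + ((y1 * z2).coeff h0 + ((y2 * z1).coeff h0 + (y2 * z2).coeff h0)) := by
    conv_lhs => rw [← hysum, ← hzsum, add_mul, mul_add, mul_add, add_assoc]
    rfl
  rw [hexpand, h12, h21, h22]
  simpa using Finsupp.mem_support_iff.1 hh0

/-- Any additive functional vanishing on `t` is constant on the support of any
divisor of a nonzero element supported on `ℤ t`. -/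
lemma f_const_on_divisor {n : ℕ} {t : H n} {β : R n} (hβ : β ≠ 0)
    (hβsupp : SupportedOn t β) {y : R n} (hdvd : y ∣ β) (f : H n →+ ℤ)
    (hft : f t = 0) : ∀ h ∈ y.coeff.support, ∀ h' ∈ y.coeff.support, f h = f h' := by
  obtain ⟨z, hz⟩ := hdvd
  have hy : y ≠ 0 := by rintro rfl; exact hβ (by rw [hz, zero_mul])
  have hz0 : z ≠ 0 := by rintro rfl; exact hβ (by rw [hz, mul_zero])
  have hβ0 : ∀ h ∈ β.coeff.support, f h = 0 := by
    intro h hh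
    obtain ⟨k, rfl⟩ := hβsupp h hh
    rw [map_zsmul, hft, smul_zero]
  set My := y.coeff.support.sup' (Finsupp.support_nonempty_iff.2 (coeff_ne_zero_of_ne hy)) f with hMy
  set Mz := z.coeff.support.sup' (Finsupp.support_nonempty_iff.2 (coeff_ne_zero_of_ne hz0)) f with hMz
  set My' := y.coeff.support.sup' (Finsupp.support_nonempty_iff.2 (coeff_ne_zero_of_ne hy)) (-f : H n →+ ℤ) with hMy'
  set Mz' := z.coeff.support.sup' (Finsupp.support_nonempty_iff.2 (coeff_ne_zero_of_ne hz0)) (-f : H n →+ ℤ) with hMz'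
  have hsum : My + Mz = 0 := by
    obtain ⟨h0, hmem, heq⟩ := mul_exists_max f hy hz0
    rw [← hz] at hmem
    rw [hMy, hMz, ← heq]; exact (hβ0 h0 hmem)
  have hsum' : My' + Mz' = 0 := by
    obtain ⟨h0, hmem, heq⟩ := mul_exists_max (-f : H n →+ ℤ) hy hz0
    rw [← hz] at hmem
    rw [hMy', hMz', ← heq]
    have hz0' := hβ0 h0 hmem
    simp only [AddMonoidHom.neg_apply, hz0', neg_zero]
  have hyge : 0 ≤ My + My' := by
    obtain ⟨a, ha⟩ := Finsupp.support_nonempty_iff.2 (coeff_ne_zero_of_ne hy)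
    have h1 : f a ≤ My := Finset.le_sup' f ha
    have h2 : -(f a) ≤ My' := by
      rw [hMy']
      simpa only [AddMonoidHom.neg_apply] using
        Finset.le_sup' (⇑(-f : H n →+ ℤ)) ha
    omega
  have hzge : 0 ≤ Mz + Mz' := by
    obtain ⟨a, ha⟩ := Finsupp.support_nonempty_iff.2 (coeff_ne_zero_of_ne hz0)
    have h1 : f a ≤ Mz := Finset.le_sup' f ha
    have h2 : -(f a) ≤ Mz' := by
      rw [hMz']
      simpa only [AddMonoidHom.neg_apply] using
        Finset.le_sup' (⇑(-f : H n →+ ℤ)) ha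
    omega
  have hMyMy' : My' = -My := by omega
  have hconst : ∀ h ∈ y.coeff.support, f h = My := by
    intro h hh
    have h1 : f h ≤ My := Finset.le_sup' f hh
    have h2 : -(f h) ≤ My' := by
      rw [hMy']
      simpa only [AddMonoidHom.neg_apply] using
        Finset.le_sup' (⇑(-f : H n →+ ℤ)) hh
    omega
  intro h hh h' hh'
  rw [hconst h hh, hconst h' hh']

/-! #### Content (gcd of coordinates) -/

/-- The content of a vector: the gcd of its coordinates. -/
def contZ {n : ℕ} (v : H n) : ℤ := Finset.univ.gcd (fun i => v i)

lemma contZ_nonneg {n : ℕ} (v : H n) : 0 ≤ contZ v := by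
  have h2 : |contZ v| = contZ v := by
    simp only [contZ, Int.abs_eq_normalize, Finset.normalize_gcd]
  rw [← h2]
  exact abs_nonneg _

lemma contZ_dvd {n : ℕ} (v : H n) (i : Fin n) : contZ v ∣ v i :=
  Finset.gcd_dvd (Finset.mem_univ i)

lemma dvd_contZ {n : ℕ} {v : H n} {d : ℤ} (h : ∀ i, d ∣ v i) : d ∣ contZ v :=
  Finset.dvd_gcd fun i _ => h i

lemma contZ_dvd_map {n : ℕ} (ψ : H n ≃+ H n) (v : H n) : contZ v ∣ contZ (ψ v) := by
  apply dvd_contZ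
  intro j
  have hv : ψ v = ∑ i ∈ Finset.univ, (v i) • ψ (Finsupp.single i (1 : ℤ)) := by
    conv_lhs => rw [← Finsupp.univ_sum_single v]
    rw [map_sum]
    apply Finset.sum_congr rfl
    intro i _
    rw [← map_zsmul]
    congr 1
    rw [Finsupp.smul_single, smul_eq_mul, mul_one]
  have : (ψ v) j = ∑ i ∈ Finset.univ, (v i) * (ψ (Finsupp.single i (1 : ℤ))) j := by
    rw [hv, Finsupp.finset_sum_apply]
    apply Finset.sum_congr rfl
    intro i _
    rw [Finsupp.smul_apply, smul_eq_mul]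
  rw [this]
  apply Finset.dvd_sum
  intro i _
  exact dvd_mul_of_dvd_left (contZ_dvd v i) _
-- equality of contents under automorphisms
lemma contZ_map {n : ℕ} (ψ : H n ≃+ H n) (v : H n) : contZ (ψ v) = contZ v := by
  refine Int.dvd_antisymm (contZ_nonneg _) (contZ_nonneg _) ?_ (contZ_dvd_map ψ v)
  have := contZ_dvd_map ψ.symm (ψ v)
  simpa using this

lemma contZ_smul {n : ℕ} (a : ℤ) (v : H n) : contZ (a • v) = |a| * contZ v := by
  rw [contZ, contZ]
  have : (fun i => (a • v) i) = fun i => a * v i := by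
    funext i; rw [Finsupp.smul_apply, smul_eq_mul]
  rw [this, Finset.gcd_mul_left]
  rw [← Int.abs_eq_normalize]

lemma contZ_ne_zero {n : ℕ} {v : H n} (hv : v ≠ 0) : contZ v ≠ 0 := by
  intro h
  apply hv
  apply Finsupp.ext
  intro i
  have := Finset.gcd_eq_zero_iff.1 h i (Finset.mem_univ i)
  simpa using this

/-- If every integral functional killing `t` also kills `ψ t`, then `ψ t = ± t`. -/
lemma map_eq_or_eq_neg {n : ℕ} {t : H n} (ht : t ≠ 0) (ψ : H n ≃+ H n)
    (hall : ∀ f : H n →+ ℤ, f t = 0 → f (ψ t) = 0) : ψ t = t ∨ ψ t = -t := by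
  set u := ψ t with hu
  obtain ⟨i, hti⟩ : ∃ i, t i ≠ 0 := by
    by_contra hc
    push_neg at hc
    exact ht (Finsupp.ext fun i => by simpa using hc i)
  have hrel : ∀ j, t i * u j = u i * t j := by
    intro j
    set f : H n →+ ℤ := (t j) • Finsupp.applyAddHom i - (t i) • Finsupp.applyAddHom j with hf
    have hft : f t = 0 := by
      simp only [hf, AddMonoidHom.sub_apply, AddMonoidHom.smul_apply, Finsupp.applyAddHom_apply,
        smul_eq_mul]
      ring
    have hfu := hall f hft
    simp only [hf, AddMonoidHom.sub_apply, AddMonoidHom.smul_apply, Finsupp.applyAddHom_apply,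
      smul_eq_mul] at hfu
    linear_combination -hfu
  have hu0 : u ≠ 0 := by
    intro h
    apply ht
    have : t = ψ.symm u := by rw [hu, ψ.symm_apply_apply]
    rw [this, h, map_zero]
  have hui : u i ≠ 0 := by
    intro h
    apply hu0
    apply Finsupp.ext
    intro j
    have := hrel j
    rw [h, zero_mul] at this
    have := mul_eq_zero.1 this
    rcases this with h' | h'
    · exact absurd h' hti
    · simpa using h'
  have hsmul : (t i) • u = (u i) • t := by
    apply Finsupp.ext
    intro j
    rw [Finsupp.smul_apply, Finsupp.smul_apply, smul_eq_mul, smul_eq_mul]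
    exact hrel j
  have hcont : |t i| * contZ u = |u i| * contZ t := by
    rw [← contZ_smul, ← contZ_smul, hsmul]
  rw [hu, contZ_map] at hcont
  have habs : |t i| = |u i| := by
    have h0 : contZ t ≠ 0 := contZ_ne_zero ht
    exact mul_right_cancel₀ h0 hcont
  rcases abs_eq_abs.1 habs with h | h
  · left
    apply Finsupp.ext
    intro j
    have := hrel j
    rw [← h] at this
    exact mul_left_cancel₀ hti this
  · right
    apply Finsupp.ext
    intro j
    have h2 := hrel j
    have h3 : u i * -(u j) = u i * t j := by rw [← h2, h]; ring
    have h4 := mul_left_cancel₀ hui h3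
    rw [Finsupp.neg_apply]
    omega

/-! #### The key lemma -/

lemma key_lemma {n : ℕ} {t : H n} (ht : t ≠ 0) {γ : R n}
    (hsupp : SupportedOn t γ) (hcard : 2 ≤ γ.coeff.support.card)
    (ψ : H n ≃+ H n) {β : R n} (hβ : β ≠ 0) (hβsupp : SupportedOn t β)
    (hdvd : inducedAut ψ γ ∣ β) :
    inducedAut ψ γ = γ ∨ inducedAut ψ γ = conjC n γ := by
  -- two distinct support elements of γ
  obtain ⟨h1, hh1, h2, hh2, hne⟩ := Finset.one_lt_card.1 (by omega : 1 < γ.coeff.support.card)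
  obtain ⟨k1, hk1⟩ := hsupp h1 hh1
  obtain ⟨k2, hk2⟩ := hsupp h2 hh2
  have hk12 : k1 ≠ k2 := by rintro rfl; exact hne (by rw [hk1, hk2])
  -- every functional killing t kills ψ t
  have hall : ∀ f : H n →+ ℤ, f t = 0 → f (ψ t) = 0 := by
    intro f hft
    have hconst := f_const_on_divisor hβ hβsupp hdvd f hft
    have hmem1 : ψ h1 ∈ (inducedAut ψ γ).coeff.support := by
      rw [inducedAut_support, Finset.mem_map]
      exact ⟨h1, hh1, rfl⟩
    have hmem2 : ψ h2 ∈ (inducedAut ψ γ).coeff.support := by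
      rw [inducedAut_support, Finset.mem_map]
      exact ⟨h2, hh2, rfl⟩
    have hcc := hconst _ hmem1 _ hmem2
    rw [hk1, hk2, map_zsmul ψ, map_zsmul ψ, map_zsmul f, map_zsmul f] at hcc
    by_contra hfz
    apply hk12
    refine mul_right_cancel₀ hfz ?_
    simpa [smul_eq_mul] using hcc
  rcases map_eq_or_eq_neg ht ψ hall with h | h
  · left
    apply inducedAut_eq_self
    intro x hx
    obtain ⟨k, rfl⟩ := hsupp x hx
    rw [map_zsmul, h]
  · right
    apply inducedAut_eq_conjC
    intro x hx
    obtain ⟨k, rfl⟩ := hsupp x hx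
    rw [map_zsmul, h, smul_neg]

/-- **Proposition, property (iii).**  If `α` is irreducible, supported on `ℤ t`
with at least two elements in its support, and `β ≠ 0` is supported on `ℤ t`,
then `Γ_{α,Φ}(β) = Γ_{α,id}(β)` for the ring automorphism `Φ` induced by any
group automorphism `φ` of `H n`. -/
theorem gamma_induced_eq_gamma_id {n : ℕ} (t : H n) (ht : t ≠ 0)
    (φ : H n ≃+ H n)
    (α : R n) (hα : Irreducible α) (hαsupp : SupportedOn t α)
    (hαcard : 2 ≤ α.coeff.support.card)
    (β : R n) (hβ : β ≠ 0) (hβsupp : SupportedOn t β) :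
    Gamma α (inducedAut φ) β = Gamma α 1 β := by
  -- facts about ᾱ
  have hconjsupp : SupportedOn t (conjC n α) := by
    intro h hh
    rw [conjC, inducedAut_support, Finset.mem_map] at hh
    obtain ⟨h', hh', rfl⟩ := hh
    obtain ⟨k, rfl⟩ := hαsupp h' hh'
    exact ⟨-k, by simp⟩
  have hconjcard : 2 ≤ (conjC n α).coeff.support.card := by
    rw [conjC, inducedAut_support, Finset.card_map]
    exact hαcard
  have hset : GammaSet α (inducedAut φ) β = GammaSet α 1 β := by
    ext N
    constructor
    · rintro ⟨l, hlen, hmem, hdvd⟩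
      refine ⟨l, hlen, ?_, hdvd⟩
      intro y hy
      have hydvd : y ∣ β := (List.dvd_prod hy).trans hdvd
      obtain ⟨m, hm⟩ := hmem y hy
      refine ⟨0, ?_⟩
      rw [zpow_zero]
      show y = α ∨ y = conjC n α
      rcases hm with hm | hm
      · rw [inducedAut_zpow] at hm
        rw [hm] at hydvd
        have := key_lemma ht hαsupp hαcard
          ((m • (show AddAut (H n) from φ) : AddAut (H n)) : H n ≃+ H n) hβ hβsupp hydvd
        rw [← hm] at this
        exact this
      · rw [inducedAut_zpow] at hm
        rw [hm] at hydvd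
        have := key_lemma ht hconjsupp hconjcard
          ((m • (show AddAut (H n) from φ) : AddAut (H n)) : H n ≃+ H n) hβ hβsupp hydvd
        rw [← hm, conjC_conjC] at this
        exact this.symm
    · rintro ⟨l, hlen, hmem, hdvd⟩
      refine ⟨l, hlen, ?_, hdvd⟩
      intro y hy
      obtain ⟨m, hm⟩ := hmem y hy
      rw [one_zpow] at hm
      refine ⟨0, ?_⟩
      rw [zpow_zero]
      exact hm
  rw [Gamma, Gamma, hset]
end
end

section
/- (Key lemma in the proof of property (iii).) Let t ∈ H be nonzero and let φ be a group automorphism of H with induced ring automorphism Φ of R. Let α ∈ R be supported on ℤt with at least two elements in its support, and suppose there exists a unit u of R such that u · Φ(α) is supported on ℤt. Then φ(t) = t or φ(t) = -t; consequently Φ(α) = α or Φ(α) = ᾱ. -/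
/-!
Context: `H n = Fin n →₀ ℤ` is the free abelian group of rank `n`, and
`R n = AddMonoidAlgebra ℤ (H n)` is its integral group ring, i.e. the ring of
Laurent polynomials in `n` variables over `ℤ`.  For `h ∈ H n`, the basis
element `[h]` of `R n` is `AddMonoidAlgebra.single h 1`.
-/

noncomputable section

open Polynomial LaurentPolynomial in
lemma card_one_of_mul_eq_single (p q : AddMonoidAlgebra ℤ ℤ) (d c : ℤ) (hc : c ≠ 0)
    (h : p * q = AddMonoidAlgebra.single d c) : p.coeff.support.card = 1 := by
  classical
  have hpq : p * q ≠ 0 := by rw [h]; exact fun h0 => hc (AddMonoidAlgebra.single_eq_zero.1 h0)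
  have hp : p ≠ 0 := left_ne_zero_of_mul hpq
  have hq : q ≠ 0 := right_ne_zero_of_mul hpq
  obtain ⟨N, p', hp'⟩ := LaurentPolynomial.exists_T_pow (R := ℤ) p
  obtain ⟨M, q', hq'⟩ := LaurentPolynomial.exists_T_pow (R := ℤ) q
  set j : ℕ := d.natAbs with hj
  set e : ℤ := d + N + M + j with he
  have he0 : 0 ≤ e := by omega
  have key : toLaurent (p' * (q' * X ^ j)) = toLaurent (Polynomial.C c * X ^ e.toNat) := by
    rw [Polynomial.toLaurent_C_mul_X_pow]
    rw [map_mul, map_mul, Polynomial.toLaurent_X_pow, hp', hq']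
    have : (p * T N) * (q * T M * T j) = (p * q) * (T N * T M * T j) := by ring
    rw [this, h, ← T_add, ← T_add, single_eq_C_mul_T, mul_assoc, ← T_add]
    congr 2
    omega
  have key2 : p' * (q' * X ^ j) = Polynomial.C c * X ^ e.toNat :=
    Polynomial.toLaurent_injective key
  have hp'0 : p' ≠ 0 := by
    intro h0
    rw [h0, map_zero] at hp'
    exact (mul_ne_zero hp (LaurentPolynomial.isUnit_T N).ne_zero) hp'.symm
  have hq'00 : q' ≠ 0 := by
    intro h0
    rw [h0, map_zero] at hq'
    exact (mul_ne_zero hq (LaurentPolynomial.isUnit_T M).ne_zero) hq'.symm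
  have hq'0 : q' * X ^ j ≠ 0 := mul_ne_zero hq'00 (pow_ne_zero j Polynomial.X_ne_zero)
  have hdeg : p'.natDegree + (q' * X ^ j).natDegree = e.toNat := by
    rw [← Polynomial.natDegree_mul hp'0 hq'0, key2, Polynomial.C_mul_X_pow_eq_monomial,
      Polynomial.natDegree_monomial, if_neg hc]
  have htdeg : p'.natTrailingDegree + (q' * X ^ j).natTrailingDegree = e.toNat := by
    rw [← Polynomial.natTrailingDegree_mul hp'0 hq'0, key2, Polynomial.C_mul_X_pow_eq_monomial,
      Polynomial.natTrailingDegree_monomial hc]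
  have h1 : p'.natTrailingDegree = p'.natDegree := by
    have := p'.natTrailingDegree_le_natDegree
    have := (q' * X ^ j).natTrailingDegree_le_natDegree
    omega
  have hsub : p'.support ⊆ {p'.natDegree} := by
    intro a ha
    have h2 := Polynomial.le_natDegree_of_mem_supp a ha
    have h3 := Polynomial.natTrailingDegree_le_of_mem_supp a ha
    simp only [Finset.mem_singleton]
    omega
  have hcard' : p'.support.card = 1 := by
    have h4 : p'.support.Nonempty := Polynomial.nonempty_support_iff.2 hp'0
    have h7 : p'.support.card ≤ 1 := by simpa using Finset.card_le_card hsub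
    have h8 : 1 ≤ p'.support.card := Finset.card_pos.2 h4
    omega
  -- transfer back to p
  have h5 : (p * T N).coeff.support.card = p.coeff.support.card := by
    have : (p * T N) = p * AddMonoidAlgebra.single (N : ℤ) (1 : ℤ) := rfl
    rw [this, AddMonoidAlgebra.support_coeff_mul_single p 1 (by simp) _, Finset.card_map]
  have h6 : (toLaurent p').coeff.support.card = p'.support.card := by
    rw [LaurentPolynomial.support_coeff_toLaurent, Finset.card_map]
  rw [← h5, ← hp', h6, hcard']


lemma card_le_one_of_unit_mul {n : ℕ} (f : H n →+ ℤ) (w : (R n)ˣ) (x z : R n) (d : ℤ)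
    (hwz : (w : R n) * x = z)
    (hz : (AddMonoidAlgebra.mapDomainRingHom ℤ f z).coeff.support ⊆ {d}) :
    (AddMonoidAlgebra.mapDomainRingHom ℤ f x).coeff.support.card ≤ 1 := by
  classical
  set F := AddMonoidAlgebra.mapDomainRingHom ℤ f with hF
  rcases eq_or_ne (F x) 0 with h0 | h0
  · rw [h0]; simp
  have hwu : IsUnit (F (w : R n)) := (Units.map F.toMonoidHom w).isUnit
  have hFz : F z = F (w : R n) * F x := by rw [← map_mul, hwz]
  have hFz0 : F z ≠ 0 := by
    rw [hFz]
    exact mul_ne_zero hwu.ne_zero h0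
  have hz' : F z = AddMonoidAlgebra.single d ((F z).coeff d) :=
    AddMonoidAlgebra.coeff_injective (Finsupp.support_subset_singleton.1 hz)
  have hc : (F z).coeff d ≠ 0 := by
    intro h1
    rw [h1, AddMonoidAlgebra.single_zero] at hz'
    exact hFz0 hz'
  have := card_one_of_mul_eq_single (F x) (F (w : R n)) d ((F z).coeff d) hc
    (by rw [mul_comm, ← hFz, ← hz'])
  omega

-- L3
lemma card_image_eq {n : ℕ} (f : H n →+ ℤ) (t : H n) (hft : f t ≠ 0) (x : R n)
    (hx : SupportedOn t x) :
    (AddMonoidAlgebra.mapDomainRingHom ℤ f x).coeff.support.card = x.coeff.support.card := by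
  classical
  have hinj : Set.InjOn f x.coeff.support := by
    intro a ha b hb hab
    obtain ⟨k, rfl⟩ := hx a ha
    obtain ⟨l, rfl⟩ := hx b hb
    rw [map_zsmul, map_zsmul] at hab
    have : k = l := by
      have := smul_left_injective ℤ (M := ℤ) hft hab
      exact this
    rw [this]
  have : (AddMonoidAlgebra.mapDomainRingHom ℤ f x).coeff.support = x.coeff.support.image f :=
    Finsupp.mapDomain_support_of_injOn x.coeff hinj
  rw [this, Finset.card_image_of_injOn hinj]

-- L4
lemma supp_image_zero {n : ℕ} (f : H n →+ ℤ) (t : H n) (hft : f t = 0) (x : R n)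
    (hx : SupportedOn t x) :
    (AddMonoidAlgebra.mapDomainRingHom ℤ f x).coeff.support ⊆ {0} := by
  classical
  intro a ha
  have := Finsupp.mapDomain_support (show a ∈ (Finsupp.mapDomain f x.coeff).support from ha)
  simp only [Finset.mem_image] at this
  obtain ⟨h, hh, rfl⟩ := this
  obtain ⟨k, rfl⟩ := hx h hh
  simp [map_zsmul, hft]

/-- **Key lemma in the proof of property (iii).**  If `α` is supported on `ℤ t`
(`t ≠ 0`) with at least two elements in its support, and `u · Φ(α)` is supported
on `ℤ t` for some unit `u`, then `φ t = t` or `φ t = -t`; consequently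
`Φ α = α` or `Φ α = ᾱ`. -/
theorem key_lemma_unit_times_image_supported {n : ℕ} (t : H n) (ht : t ≠ 0)
    (φ : H n ≃+ H n)
    (α : R n) (hαsupp : SupportedOn t α) (hαcard : 2 ≤ α.coeff.support.card)
    (u : (R n)ˣ) (hu : SupportedOn t ((u : R n) * inducedAut φ α)) :
    (φ t = t ∨ φ t = -t) ∧ (inducedAut φ α = α ∨ inducedAut φ α = conjC n α) := by
  classical
  set s : H n := φ t with hs
  set β : R n := (u : R n) * inducedAut φ α with hβ
  have hΦmap : (inducedAut φ α).coeff = Finsupp.mapDomain φ α.coeff := by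
    rfl
  -- Φα is supported on ℤ s
  have hΦsupp : SupportedOn s (inducedAut φ α) := by
    intro h hh
    rw [hΦmap] at hh
    have := Finsupp.mapDomain_support hh
    simp only [Finset.mem_image] at this
    obtain ⟨h', hh', rfl⟩ := this
    obtain ⟨k, rfl⟩ := hαsupp h' hh'
    exact ⟨k, by rw [hs]; exact map_zsmul φ k t⟩
  -- card of support of Φα
  have hΦcard : (inducedAut φ α).coeff.support.card = α.coeff.support.card := by
    rw [hΦmap, Finsupp.mapDomain_support_of_injOn α.coeff (φ.injective.injOn),
      Finset.card_image_of_injOn (φ.injective.injOn)]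
  have hαne : α ≠ 0 := by
    intro h0
    rw [h0] at hαcard
    simp at hαcard
  have hΦne : inducedAut φ α ≠ 0 := by
    intro h0
    have : (inducedAut φ α).coeff.support.card = 0 := by rw [h0]; simp
    omega
  have hsne : s ≠ 0 := by
    intro h0
    have h1 : φ t = 0 := h0
    exact ht (φ.injective (by rw [h1, map_zero]))
  -- Step A
  have stepA : ∀ f : H n →+ ℤ, f t = 0 → f s = 0 := by
    intro f hft
    by_contra hfs
    have h1 := card_le_one_of_unit_mul f u (inducedAut φ α) β 0 rfl
      (supp_image_zero f t hft β hu)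
    rw [card_image_eq f s hfs _ hΦsupp, hΦcard] at h1
    omega
  -- Step B (as a contradiction)
  have stepB : ∀ f : H n →+ ℤ, f s = 0 → f t = 0 := by
    intro f hfs
    by_contra hft
    have hinv : ((u⁻¹ : (R n)ˣ) : R n) * β = inducedAut φ α := by
      rw [hβ, ← mul_assoc, Units.inv_mul, one_mul]
    have h1 := card_le_one_of_unit_mul f u⁻¹ β (inducedAut φ α) 0 hinv
      (supp_image_zero f s hfs _ hΦsupp)
    rw [card_image_eq f t hft β hu] at h1
    have hβne : β ≠ 0 := by
      rw [hβ]
      exact mul_ne_zero (Units.ne_zero u) hΦne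
    have hβcard : β.coeff.support.card = 1 := by
      have : β.coeff.support.Nonempty :=
        Finsupp.support_nonempty_iff.2 (fun h => hβne (AddMonoidAlgebra.coeff_injective h))
      have := Finset.card_pos.2 this
      omega
    obtain ⟨h0, c, hc, hβeq⟩ := Finsupp.card_support_eq_one'.1 hβcard
    -- pick a coordinate where s is nonzero
    have : ∃ i, s i ≠ 0 := by
      by_contra hno
      push_neg at hno
      exact hsne (Finsupp.ext hno)
    obtain ⟨i, hi⟩ := this
    set g : H n →+ ℤ := Finsupp.applyAddHom i with hg
    have hgs : g s ≠ 0 := hi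
    have h2 := card_le_one_of_unit_mul g u (inducedAut φ α) β (g h0) rfl ?_
    · rw [card_image_eq g s hgs _ hΦsupp, hΦcard] at h2
      omega
    · show (Finsupp.mapDomain g β.coeff).support ⊆ _
      rw [hβeq]
      have : (Finsupp.mapDomain g (Finsupp.single h0 c) :
          ℤ →₀ ℤ) = Finsupp.single (g h0) c := Finsupp.mapDomain_single
      rw [this]
      exact Finsupp.support_single_subset
    -- pick coordinate with s i ≠ 0
  have hex : ∃ i, s i ≠ 0 := by
    by_contra hno
    push_neg at hno
    exact hsne (Finsupp.ext hno)
  obtain ⟨i, hi⟩ := hex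
  set b : ℤ := s i with hbdef
  set a : ℤ := t i with hadef
  have hb0 : b ≠ 0 := hi
  have hst : ∀ j, b * t j = s j * a := by
    intro j
    set fj : H n →+ ℤ :=
      b • (Finsupp.applyAddHom j : H n →+ ℤ) - (s j) • (Finsupp.applyAddHom i : H n →+ ℤ)
      with hfj
    have hfs : fj s = 0 := by
      simp only [hfj, AddMonoidHom.sub_apply, AddMonoidHom.smul_apply,
        Finsupp.applyAddHom_apply, smul_eq_mul]
      ring
    have hft := stepB fj hfs
    simp only [hfj, AddMonoidHom.sub_apply, AddMonoidHom.smul_apply,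
      Finsupp.applyAddHom_apply, smul_eq_mul] at hft
    linarith
  have ha0 : a ≠ 0 := by
    intro h0
    apply ht
    apply Finsupp.ext
    intro j
    have := hst j
    rw [h0, mul_zero] at this
    have : t j = 0 := by
      rcases mul_eq_zero.1 this with h | h
      · exact absurd h hb0
      · exact h
    simpa using this
  have hab : a • s = b • t := by
    apply Finsupp.ext
    intro j
    simp only [Finsupp.smul_apply, smul_eq_mul]
    rw [mul_comm]
    exact (hst j).symm
  -- iteration identities
  have hφs : a • φ s = b • s := by
    have h1 := congrArg φ hab
    rw [map_zsmul, map_zsmul] at h1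
    rw [h1]
  have hφit : b • φ.symm t = a • t := by
    have h1 := congrArg φ.symm hab
    rw [map_zsmul, map_zsmul] at h1
    have h2 : φ.symm s = t := by rw [hs]; exact φ.symm_apply_apply t
    rw [h2] at h1
    exact h1.symm
  have key1 : ∀ k : ℕ, a ^ k • (⇑φ)^[k] s = b ^ k • s := by
    intro k
    induction k with
    | zero => simp
    | succ k ih =>
      rw [Function.iterate_succ_apply', pow_succ, pow_succ]
      have h3 := congrArg φ ih
      rw [map_zsmul, map_zsmul] at h3
      calc (a ^ k * a) • φ ((⇑φ)^[k] s) = a ^ k • (a • φ ((⇑φ)^[k] s)) := mul_smul _ _ _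
        _ = a ^ k • (a • φ ((⇑φ)^[k] s)) := rfl
        _ = a • (a ^ k • φ ((⇑φ)^[k] s)) := smul_comm _ _ _
        _ = a • (b ^ k • φ s) := by rw [h3]
        _ = b ^ k • (a • φ s) := smul_comm _ _ _
        _ = b ^ k • (b • s) := by rw [hφs]
        _ = (b ^ k * b) • s := (mul_smul _ _ _).symm
  have key2 : ∀ k : ℕ, b ^ k • (⇑φ.symm)^[k] t = a ^ k • t := by
    intro k
    induction k with
    | zero => simp
    | succ k ih =>
      rw [Function.iterate_succ_apply', pow_succ, pow_succ]
      have h3 := congrArg φ.symm ih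
      rw [map_zsmul, map_zsmul] at h3
      calc (b ^ k * b) • φ.symm ((⇑φ.symm)^[k] t) = b • (b ^ k • φ.symm ((⇑φ.symm)^[k] t)) := by
            rw [mul_smul]; exact smul_comm _ _ _
        _ = b • (a ^ k • φ.symm t) := by rw [h3]
        _ = a ^ k • (b • φ.symm t) := smul_comm _ _ _
        _ = a ^ k • (a • t) := by rw [hφit]
        _ = (a ^ k * a) • t := (mul_smul _ _ _).symm
  -- gcd reduction
  set d : ℤ := (Int.gcd a b : ℤ) with hddef
  have hd0 : d ≠ 0 := by
    simp only [hddef, ne_eq, Int.natCast_eq_zero, Int.gcd_eq_zero_iff, not_and_or]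
    exact Or.inl ha0
  set a' : ℤ := a / d with ha'def
  set b' : ℤ := b / d with hb'def
  have hda : d * a' = a := Int.mul_ediv_cancel' (Int.gcd_dvd_left a b)
  have hdb : d * b' = b := Int.mul_ediv_cancel' (Int.gcd_dvd_right a b)
  have cop : IsCoprime a' b' := by
    rw [Int.isCoprime_iff_gcd_eq_one]
    exact Int.gcd_div_gcd_div_gcd (Nat.pos_of_ne_zero (by
      intro h0; exact hd0 (by simp [hddef, h0])))
  have ha'0 : a' ≠ 0 := by
    intro h0
    rw [h0, mul_zero] at hda
    exact ha0 hda.symm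
  have hb'0 : b' ≠ 0 := by
    intro h0
    rw [h0, mul_zero] at hdb
    exact hb0 hdb.symm
  have key1' : ∀ k : ℕ, a' ^ k • (⇑φ)^[k] s = b' ^ k • s := by
    intro k
    have h1 := key1 k
    rw [← hda, ← hdb, mul_pow, mul_pow, mul_smul, mul_smul] at h1
    exact smul_right_injective (H n) (pow_ne_zero k hd0) h1
  have key2' : ∀ k : ℕ, b' ^ k • (⇑φ.symm)^[k] t = a' ^ k • t := by
    intro k
    have h1 := key2 k
    rw [← hda, ← hdb, mul_pow, mul_pow, mul_smul, mul_smul] at h1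
    exact smul_right_injective (H n) (pow_ne_zero k hd0) h1
  have abound : ∀ k : ℕ, a' ^ k ∣ b := by
    intro k
    have h1 := congrArg (fun v : H n => v i) (key1' k)
    simp only [Finsupp.smul_apply, smul_eq_mul] at h1
    have h2 : a' ^ k ∣ b' ^ k * b := ⟨((⇑φ)^[k] s) i, by rw [← h1]⟩
    exact (cop.pow).dvd_of_dvd_mul_left h2
  have bbound : ∀ k : ℕ, b' ^ k ∣ a := by
    intro k
    have h1 := congrArg (fun v : H n => v i) (key2' k)
    simp only [Finsupp.smul_apply, smul_eq_mul] at h1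
    have h2 : b' ^ k ∣ a' ^ k * a := ⟨((⇑φ.symm)^[k] t) i, by rw [← h1]⟩
    exact (cop.symm.pow).dvd_of_dvd_mul_left h2
  have na' : a'.natAbs = 1 := by
    by_contra h0
    have h2 : 2 ≤ a'.natAbs := by
      have : a'.natAbs ≠ 0 := Int.natAbs_ne_zero.2 ha'0
      omega
    have h3 := abound b.natAbs
    have h4 : a'.natAbs ^ b.natAbs ∣ b.natAbs := by
      rw [← Int.natAbs_pow]
      exact Int.natAbs_dvd_natAbs.2 h3
    have h5 := Nat.le_of_dvd (Nat.pos_of_ne_zero (Int.natAbs_ne_zero.2 hb0)) h4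
    have h6 := Nat.lt_two_pow_self (n := b.natAbs)
    have h7 := Nat.pow_le_pow_left h2 b.natAbs
    omega
  have nb' : b'.natAbs = 1 := by
    by_contra h0
    have h2 : 2 ≤ b'.natAbs := by
      have : b'.natAbs ≠ 0 := Int.natAbs_ne_zero.2 hb'0
      omega
    have h3 := bbound a.natAbs
    have h4 : b'.natAbs ^ a.natAbs ∣ a.natAbs := by
      rw [← Int.natAbs_pow]
      exact Int.natAbs_dvd_natAbs.2 h3
    have h5 := Nat.le_of_dvd (Nat.pos_of_ne_zero (Int.natAbs_ne_zero.2 ha0)) h4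
    have h6 := Nat.lt_two_pow_self (n := a.natAbs)
    have h7 := Nat.pow_le_pow_left h2 a.natAbs
    omega
  have hnatabs : a.natAbs = b.natAbs := by
    rw [← hda, ← hdb, Int.natAbs_mul, Int.natAbs_mul, na', nb']
  have hor : s = t ∨ s = -t := by
    rcases Int.natAbs_eq_natAbs_iff.1 hnatabs with hab' | hab'
    · left
      rw [hab'] at hab
      exact smul_right_injective (H n) hb0 hab
    · right
      rw [hab'] at hab
      have : b • (-s) = b • t := by
        rw [smul_neg, ← neg_smul]
        exact hab
      have h2 := smul_right_injective (H n) hb0 this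
      rw [← h2]
      simp
  -- conclusion
  have hconj : (conjC n α).coeff = Finsupp.mapDomain (fun h : H n => -h) α.coeff := by
    rfl
  rcases hor with h | h
  · refine ⟨Or.inl h, Or.inl ?_⟩
    apply AddMonoidAlgebra.coeff_injective
    rw [hΦmap]
    have h2 : Finsupp.mapDomain (⇑φ) α.coeff = Finsupp.mapDomain id α.coeff := by
      apply Finsupp.mapDomain_congr
      intro x hx
      obtain ⟨k, rfl⟩ := hαsupp x hx
      rw [map_zsmul]
      show k • s = _
      rw [h]
      rfl
    rw [h2, Finsupp.mapDomain_id]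
  · refine ⟨Or.inr h, Or.inr ?_⟩
    apply AddMonoidAlgebra.coeff_injective
    rw [hΦmap, hconj]
    apply Finsupp.mapDomain_congr
    intro x hx
    obtain ⟨k, rfl⟩ := hαsupp x hx
    rw [map_zsmul]
    show k • s = -(k • t)
    rw [h, smul_neg]
end
end

section
/- Every unit of the group ring R = AddMonoidAlgebra ℤ H of the free abelian group H = (Fin n →₀ ℤ) is a trivial unit: if u ∈ R is a unit, then u = [h] or u = -[h] for some h ∈ H. (This is the fact, used in the proof of property (iii), that the units of ℤ[H₂(X)] are all of the form ±h for h ∈ H₂(X) when H₂(X) is free abelian.) -/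
/-!
Context: `H n = Fin n →₀ ℤ` is the free abelian group of rank `n`, and
`R n = AddMonoidAlgebra ℤ (H n)` is its integral group ring, i.e. the ring of
Laurent polynomials in `n` variables over `ℤ`.  For `h ∈ H n`, the basis
element `[h]` of `R n` is `AddMonoidAlgebra.single h 1`.
-/

noncomputable section

open Finsupp in
private lemma max_uniqueAdd {n : ℕ} {f g : R n} (hf : f ≠ 0) (hg : g ≠ 0) :
    ∃ a0 ∈ f.coeff.support, ∃ b0 ∈ g.coeff.support,
      (∀ a ∈ f.coeff.support, toLex a ≤ toLex a0) ∧ (∀ b ∈ g.coeff.support, toLex b ≤ toLex b0) ∧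
      UniqueAdd f.coeff.support g.coeff.support a0 b0 := by
  classical
  have hfs : (f.coeff.support.image toLex).Nonempty :=
    (Finsupp.support_nonempty_iff.mpr (mt AddMonoidAlgebra.coeff_eq_zero.mp hf)).image _
  have hgs : (g.coeff.support.image toLex).Nonempty :=
    (Finsupp.support_nonempty_iff.mpr (mt AddMonoidAlgebra.coeff_eq_zero.mp hg)).image _
  obtain ⟨a0, ha0, ha0e⟩ := Finset.mem_image.mp ((f.coeff.support.image toLex).max'_mem hfs)
  obtain ⟨b0, hb0, hb0e⟩ := Finset.mem_image.mp ((g.coeff.support.image toLex).max'_mem hgs)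
  have hamax : ∀ a ∈ f.coeff.support, toLex a ≤ toLex a0 := fun a ha => by
    rw [ha0e]; exact Finset.le_max' _ _ (Finset.mem_image_of_mem _ ha)
  have hbmax : ∀ b ∈ g.coeff.support, toLex b ≤ toLex b0 := fun b hb => by
    rw [hb0e]; exact Finset.le_max' _ _ (Finset.mem_image_of_mem _ hb)
  refine ⟨a0, ha0, b0, hb0, hamax, hbmax, fun a b ha hb hab => ?_⟩
  have h1 := hamax a ha
  have h2 := hbmax b hb
  have hsum : toLex a + toLex b = toLex a0 + toLex b0 := by
    rw [← toLex_add, ← toLex_add, hab]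
  constructor
  · by_contra hne
    have : toLex a < toLex a0 := h1.lt_of_ne (fun h => hne (toLex.injective h))
    exact absurd hsum (add_lt_add_of_lt_of_le this h2).ne
  · by_contra hne
    have : toLex b < toLex b0 := h2.lt_of_ne (fun h => hne (toLex.injective h))
    exact absurd hsum (add_lt_add_of_le_of_lt h1 this).ne

open Finsupp in
private lemma min_uniqueAdd {n : ℕ} {f g : R n} (hf : f ≠ 0) (hg : g ≠ 0) :
    ∃ a0 ∈ f.coeff.support, ∃ b0 ∈ g.coeff.support,
      (∀ a ∈ f.coeff.support, toLex a0 ≤ toLex a) ∧ (∀ b ∈ g.coeff.support, toLex b0 ≤ toLex b) ∧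
      UniqueAdd f.coeff.support g.coeff.support a0 b0 := by
  classical
  have hfs : (f.coeff.support.image toLex).Nonempty :=
    (Finsupp.support_nonempty_iff.mpr (mt AddMonoidAlgebra.coeff_eq_zero.mp hf)).image _
  have hgs : (g.coeff.support.image toLex).Nonempty :=
    (Finsupp.support_nonempty_iff.mpr (mt AddMonoidAlgebra.coeff_eq_zero.mp hg)).image _
  obtain ⟨a0, ha0, ha0e⟩ := Finset.mem_image.mp ((f.coeff.support.image toLex).min'_mem hfs)
  obtain ⟨b0, hb0, hb0e⟩ := Finset.mem_image.mp ((g.coeff.support.image toLex).min'_mem hgs)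
  have hamin : ∀ a ∈ f.coeff.support, toLex a0 ≤ toLex a := fun a ha => by
    rw [ha0e]; exact Finset.min'_le _ _ (Finset.mem_image_of_mem _ ha)
  have hbmin : ∀ b ∈ g.coeff.support, toLex b0 ≤ toLex b := fun b hb => by
    rw [hb0e]; exact Finset.min'_le _ _ (Finset.mem_image_of_mem _ hb)
  refine ⟨a0, ha0, b0, hb0, hamin, hbmin, fun a b ha hb hab => ?_⟩
  have h1 := hamin a ha
  have h2 := hbmin b hb
  have hsum : toLex a + toLex b = toLex a0 + toLex b0 := by
    rw [← toLex_add, ← toLex_add, hab]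
  constructor
  · by_contra hne
    have : toLex a0 < toLex a := h1.lt_of_ne (fun h => hne (toLex.injective h.symm))
    exact absurd hsum.symm (add_lt_add_of_lt_of_le this h2).ne
  · by_contra hne
    have : toLex b0 < toLex b := h2.lt_of_ne (fun h => hne (toLex.injective h.symm))
    exact absurd hsum.symm (add_lt_add_of_le_of_lt h1 this).ne


/-- **Trivial units.**  Every unit of `R n = ℤ[H n]` is of the form `±[h]`. -/
theorem units_are_trivial {n : ℕ} (u : R n) (hu : IsUnit u) :
    ∃ h : H n, u = AddMonoidAlgebra.single h 1 ∨ u = -AddMonoidAlgebra.single h 1 := by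
  classical
  obtain ⟨w, rfl⟩ := hu
  set u := (w : R n) with hu'
  have hv' : u * (↑w⁻¹ : R n) = 1 := w.mul_inv
  set v := (↑w⁻¹ : R n) with hv''
  have hu0 : u ≠ 0 := left_ne_zero_of_mul_eq_one hv'
  have hv0 : v ≠ 0 := right_ne_zero_of_mul_eq_one hv'
  obtain ⟨a0, ha0, b0, hb0, hamax, hbmax, hmax⟩ := max_uniqueAdd hu0 hv0
  obtain ⟨a1, ha1, b1, hb1, hamin, hbmin, hmin⟩ := min_uniqueAdd hu0 hv0
  have hone : (1 : R n) = AddMonoidAlgebra.single 0 1 := rfl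
  have key : ∀ a ∈ u.coeff.support, ∀ b ∈ v.coeff.support, UniqueAdd u.coeff.support v.coeff.support a b → a + b = 0 := by
    intro a ha b hb huq
    have := AddMonoidAlgebra.coeff_mul_add_of_uniqueAdd (f := u) (g := v) huq
    rw [hv'] at this
    have hne : (1 : R n).coeff (a + b) ≠ 0 := by
      rw [this]
      exact mul_ne_zero (Finsupp.mem_support_iff.mp ha) (Finsupp.mem_support_iff.mp hb)
    have : a + b ∈ (1 : R n).coeff.support := Finsupp.mem_support_iff.mpr hne
    rw [hone, AddMonoidAlgebra.coeff_single] at this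
    have := Finsupp.support_single_subset this
    simpa using this
  have hsum0 : a0 + b0 = 0 := key a0 ha0 b0 hb0 hmax
  have hsum1 : a1 + b1 = 0 := key a1 ha1 b1 hb1 hmin
  -- a1 = a0
  have haeq : toLex a1 = toLex a0 := by
    have h1 := hamin a0 ha0
    have h2 := hbmin b0 hb0
    have hsum : toLex a1 + toLex b1 = toLex a0 + toLex b0 := by
      rw [← toLex_add, ← toLex_add, hsum0, hsum1]
    by_contra hne
    have : toLex a1 < toLex a0 := h1.lt_of_ne hne
    exact absurd hsum (add_lt_add_of_lt_of_le this h2).ne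
  have hsupp : u.coeff.support ⊆ {a0} := by
    intro a ha
    have h1 := hamax a ha
    have h2 := hamin a ha
    rw [haeq] at h2
    have : toLex a = toLex a0 := le_antisymm h1 h2
    simpa using toLex.injective this
  have hueq : u.coeff = Finsupp.single a0 (u.coeff a0) := Finsupp.support_subset_singleton.mp hsupp
  -- similarly for v it suffices to use hsum0 to compute the product coefficient
  have hva : v.coeff = Finsupp.single b0 (v.coeff b0) := by
    have hbeq : toLex b1 = toLex b0 := by
      have h1 := hamin a0 ha0
      have h2 := hbmin b0 hb0
      have hsum : toLex a1 + toLex b1 = toLex a0 + toLex b0 := by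
        rw [← toLex_add, ← toLex_add, hsum0, hsum1]
      by_contra hne
      have : toLex b1 < toLex b0 := h2.lt_of_ne hne
      exact absurd hsum (add_lt_add_of_le_of_lt h1 this).ne
    have hsupp : v.coeff.support ⊆ {b0} := by
      intro b hb
      have h1 := hbmax b hb
      have h2 := hbmin b hb
      rw [hbeq] at h2
      simpa using toLex.injective (le_antisymm h1 h2)
    exact Finsupp.support_subset_singleton.mp hsupp
  have hcd : u.coeff a0 * v.coeff b0 = 1 := by
    have hueq' : u = AddMonoidAlgebra.single a0 (u.coeff a0) := AddMonoidAlgebra.coeff_injective hueq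
    have hva' : v = AddMonoidAlgebra.single b0 (v.coeff b0) := AddMonoidAlgebra.coeff_injective hva
    have h : (AddMonoidAlgebra.single a0 (u.coeff a0) : R n) * AddMonoidAlgebra.single b0 (v.coeff b0)
        = 1 := by rw [← hueq', ← hva']; exact hv'
    rw [AddMonoidAlgebra.single_mul_single, hsum0] at h
    rw [AddMonoidAlgebra.one_def] at h
    have h3 : Finsupp.single (0 : H n) (u.coeff a0 * v.coeff b0) = Finsupp.single (0 : H n) (1 : ℤ) := congrArg AddMonoidAlgebra.coeff h
    exact Finsupp.single_injective _ h3
  rcases Int.isUnit_iff.mp (IsUnit.of_mul_eq_one _ hcd) with h1 | h1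
  · exact ⟨a0, Or.inl (AddMonoidAlgebra.coeff_injective (by rw [hueq, h1, AddMonoidAlgebra.coeff_single]))⟩
  · refine ⟨a0, Or.inr ?_⟩
    apply AddMonoidAlgebra.coeff_injective
    rw [hueq, h1, AddMonoidAlgebra.coeff_neg, AddMonoidAlgebra.coeff_single, Finsupp.single_neg]
end
end

section
/- (Computation of Γ for the identity automorphism.) Let α ∈ R be irreducible and let x ∈ R be nonzero. If α and ᾱ are not associates in R, then Γ_{α,id}(x) equals the multiplicity of α in x plus the multiplicity of ᾱ in x; if α and ᾱ are associates, then Γ_{α,id}(x) equals the multiplicity of α in x. (Here the multiplicity of an irreducible p in x is the largest k with p^k dividing x, and id is the identity ring automorphism of R.) -/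
/-!
Context: `H n = Fin n →₀ ℤ` is the free abelian group of rank `n`, and
`R n = AddMonoidAlgebra ℤ (H n)` is its integral group ring, i.e. the ring of
Laurent polynomials in `n` variables over `ℤ`.  For `h ∈ H n`, the basis
element `[h]` of `R n` is `AddMonoidAlgebra.single h 1`.
-/

noncomputable section

namespace GammaAux

open AddMonoidAlgebra

variable {n : ℕ}

instance : IsDomain (R n) := NoZeroDivisors.to_isDomain _

/-- The max-term multiplication lemma, with respect to an injective additive map into a
linear order. -/
theorem mul_apply_max {L : Type*} [LinearOrder L] [AddCommGroup L]
    [AddLeftStrictMono L] [AddRightStrictMono L]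
    (D : H n →+ L) (hD : Function.Injective D) {x y : R n} {a b : H n}
    (hax : ∀ g ∈ x.coeff.support, D g ≤ D a) (hby : ∀ g ∈ y.coeff.support, D g ≤ D b) :
    (x * y).coeff (a + b) = x.coeff a * y.coeff b := by
  classical
  have := addLeftMono_of_addLeftStrictMono L
  have := addRightMono_of_addRightStrictMono L
  rw [AddMonoidAlgebra.coeff_mul]
  rw [Finsupp.sum]
  rw [Finset.sum_eq_single a]
  · rw [Finsupp.sum, Finset.sum_eq_single b]
    · simp
    · intro g hg hne
      rw [if_neg]
      intro he
      apply_fun D at he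
      rw [map_add, map_add] at he
      exact (add_lt_add_right (lt_of_le_of_ne (hby g hg) (fun h => hne (hD h))) _).ne he
    · intro hb
      rw [Finsupp.notMem_support_iff.1 hb, if_pos rfl, mul_zero]
  · intro g hg hne
    rw [Finsupp.sum]
    apply Finset.sum_eq_zero
    intro g' hg'
    rw [if_neg]
    intro he
    apply_fun D at he
    rw [map_add, map_add] at he
    exact (add_lt_add_of_lt_of_le (lt_of_le_of_ne (hax g hg) (fun h => hne (hD h)))
      (hby g' hg')).ne he
  · intro ha
    rw [Finsupp.notMem_support_iff.1 ha]
    apply Finset.sum_eq_zero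
    intro g' _
    rw [ite_eq_right_iff]
    intro
    rw [zero_mul]

/-- Units of the group ring are (up to sign) single monomials. -/
theorem isUnit_iff {x : R n} :
    IsUnit x ↔ ∃ (h : H n) (c : ℤ), IsUnit c ∧ x = AddMonoidAlgebra.single h c := by
  constructor
  · rintro ⟨u, rfl⟩
    have hxy : (u : R n) * (↑u⁻¹ : R n) = 1 := u.mul_inv
    set x : R n := (u : R n)
    set y : R n := ((u⁻¹ : (R n)ˣ) : R n)
    have hx : x ≠ 0 := by
      intro h0
      rw [h0, zero_mul] at hxy
      exact one_ne_zero hxy.symm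
    have hy : y ≠ 0 := by
      intro h0
      rw [h0, mul_zero] at hxy
      exact one_ne_zero hxy.symm
    -- maxima and minima of supports
    set D : H n →+ Lex (Fin n →₀ ℤ) := AddMonoidHom.mk' (fun h => toLex h) (fun _ _ => rfl)
    set D' : H n →+ Lex (Fin n →₀ ℤ) :=
      AddMonoidHom.mk' (fun h => toLex (-h)) (fun a b => congrArg toLex (neg_add_rev a b ▸ (neg_add a b).trans rfl))
    have hD : Function.Injective D := fun a b h => by exact toLex.injective h
    have hD' : Function.Injective D' := fun a b h => by
      have : toLex (-a) = toLex (-b) := h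
      have := toLex.injective this
      simpa using this
    obtain ⟨aM, haM, haMax⟩ := x.coeff.support.exists_max_image (fun g => D g)
      (Finsupp.support_nonempty_iff.2 (mt AddMonoidAlgebra.coeff_eq_zero.1 hx))
    obtain ⟨bM, hbM, hbMax⟩ := y.coeff.support.exists_max_image (fun g => D g)
      (Finsupp.support_nonempty_iff.2 (mt AddMonoidAlgebra.coeff_eq_zero.1 hy))
    obtain ⟨am, ham, hamax⟩ := x.coeff.support.exists_max_image (fun g => D' g)
      (Finsupp.support_nonempty_iff.2 (mt AddMonoidAlgebra.coeff_eq_zero.1 hx))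
    obtain ⟨bm, hbm, hbmax⟩ := y.coeff.support.exists_max_image (fun g => D' g)
      (Finsupp.support_nonempty_iff.2 (mt AddMonoidAlgebra.coeff_eq_zero.1 hy))
    have hMne : x.coeff aM * y.coeff bM ≠ 0 :=
      mul_ne_zero (Finsupp.mem_support_iff.1 haM) (Finsupp.mem_support_iff.1 hbM)
    have hM : aM + bM = 0 := by
      have h1 : (x * y).coeff (aM + bM) ≠ 0 := by
        rw [mul_apply_max D hD haMax hbMax]; exact hMne
      have h2 : aM + bM ∈ (x * y).coeff.support := Finsupp.mem_support_iff.2 h1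
      rw [hxy, AddMonoidAlgebra.one_def, AddMonoidAlgebra.coeff_single] at h2
      simpa using Finsupp.support_single_subset h2
    have hmne : x.coeff am * y.coeff bm ≠ 0 :=
      mul_ne_zero (Finsupp.mem_support_iff.1 ham) (Finsupp.mem_support_iff.1 hbm)
    have hm : am + bm = 0 := by
      have h1 : (x * y).coeff (am + bm) ≠ 0 := by
        rw [mul_apply_max D' hD' hamax hbmax]; exact hmne
      have h2 : am + bm ∈ (x * y).coeff.support := Finsupp.mem_support_iff.2 h1
      rw [hxy, AddMonoidAlgebra.one_def, AddMonoidAlgebra.coeff_single] at h2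
      simpa using Finsupp.support_single_subset h2
    -- conclude am = aM
    have key : am = aM := by
      have h1 : D am ≤ D aM := haMax am ham
      have h2 : D bm ≤ D bM := hbMax bm hbm
      have h3 : D am + D bm = D aM + D bM := by
        rw [← map_add, ← map_add, hm, hM]
      have h4 : D am = D aM := by
        by_contra hne
        have : D am < D aM := lt_of_le_of_ne h1 hne
        have : D am + D bm < D aM + D bM := add_lt_add_of_lt_of_le this h2
        exact absurd h3 this.ne
      exact hD h4
    -- support of x is {aM}
    have hsupp : x.coeff.support ⊆ {aM} := by
      intro g hg
      rw [Finset.mem_singleton]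
      have h1 : D g ≤ D aM := haMax g hg
      have h2 : D' g ≤ D' am := hamax g hg
      have h3 : toLex (-g) ≤ toLex (-aM) := by rw [← key]; exact h2
      have h4 : toLex aM ≤ toLex g := by
        have := neg_le_neg h3
        simpa using this
      exact hD (le_antisymm h1 h4)
    have hxe : x = AddMonoidAlgebra.single aM (x.coeff aM) :=
      AddMonoidAlgebra.coeff_injective (Finsupp.support_subset_singleton.1 hsupp)
    -- similarly for y (only need the coefficient computation)
    have hsuppy : y.coeff.support ⊆ {bM} := by
      intro g hg
      rw [Finset.mem_singleton]
      have keyb : bm = bM := by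
        have := congrArg (fun t => -am + t) (hm.trans hM.symm)
        simpa [key, add_comm, ← add_assoc] using by
          have h := hm.trans hM.symm
          have : bm = -am + (am + bm) := by abel
          rw [this, hm.trans hM.symm, key]
          abel
      have h1 : D g ≤ D bM := hbMax g hg
      have h2 : D' g ≤ D' bm := hbmax g hg
      have h3 : toLex (-g) ≤ toLex (-bM) := by rw [← keyb]; exact h2
      have h4 : toLex bM ≤ toLex g := by
        have := neg_le_neg h3
        simpa using this
      exact hD (le_antisymm h1 h4)
    have hye : y = AddMonoidAlgebra.single bM (y.coeff bM) :=
      AddMonoidAlgebra.coeff_injective (Finsupp.support_subset_singleton.1 hsuppy)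
    refine ⟨aM, x.coeff aM, ?_, hxe⟩
    have : x * y = AddMonoidAlgebra.single (aM + bM) (x.coeff aM * y.coeff bM) := by
      conv_lhs => rw [hxe, hye]
      rw [AddMonoidAlgebra.single_mul_single]
    rw [hxy, hM, AddMonoidAlgebra.one_def] at this
    have hc : x.coeff aM * y.coeff bM = 1 := by
      have := congrArg (fun f : R n => f.coeff 0) this
      simpa using this.symm
    exact IsUnit.of_mul_eq_one _ hc
  · rintro ⟨h, c, hc, rfl⟩
    refine IsUnit.of_mul_eq_one (AddMonoidAlgebra.single (-h) c) ?_
    rw [AddMonoidAlgebra.single_mul_single, add_neg_cancel]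
    rw [Int.isUnit_iff] at hc
    rcases hc with rfl | rfl <;> simp [AddMonoidAlgebra.one_def]


open MvPolynomial


abbrev A (n : ℕ) : Type := MvPolynomial (Fin n) ℤ

def φh (n : ℕ) : (Fin n →₀ ℕ) →+ H n :=
  Finsupp.mapRange.addMonoidHom (Nat.castAddMonoidHom ℤ)

lemma φh_apply (m : Fin n →₀ ℕ) (i : Fin n) : φh n m i = (m i : ℤ) := by
  simp [φh]

lemma φh_injective : Function.Injective (φh n) :=
  Finsupp.mapRange_injective _ (by simp) Nat.cast_injective

def emb (n : ℕ) : A n →+* R n := AddMonoidAlgebra.mapDomainRingHom ℤ (φh n)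

lemma emb_apply (p : A n) : emb n p = AddMonoidAlgebra.mapDomain (φh n) p := rfl

lemma emb_single (m : Fin n →₀ ℕ) (c : ℤ) :
    emb n (MvPolynomial.monomial m c) = AddMonoidAlgebra.single (φh n m) c := by
  rw [← MvPolynomial.single_eq_monomial, emb_apply]
  exact AddMonoidAlgebra.mapDomain_single

lemma emb_injective : Function.Injective (emb n) :=
  AddMonoidAlgebra.mapDomain_injective φh_injective

lemma support_emb (p : A n) : (emb n p).coeff.support = p.support.image (φh n) := by
  classical
  rw [emb_apply]
  exact Finsupp.mapDomain_support_of_injective φh_injective (AddMonoidAlgebra.coeff p)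



/-- The "set `X i` to zero" ring homomorphism. -/
def setZero (i : Fin n) : A n →+* A n :=
  (MvPolynomial.aeval (Function.update MvPolynomial.X i 0)).toRingHom

lemma setZero_monomial (i : Fin n) (m : Fin n →₀ ℕ) (c : ℤ) :
    setZero i (monomial m c) = if m i = 0 then monomial m c else 0 := by
  classical
  rw [setZero]
  simp only [AlgHom.toRingHom_eq_coe, RingHom.coe_coe, aeval_monomial]
  split_ifs with h
  · have : (m.prod fun j e => (Function.update X i 0 j) ^ e)
        = m.prod fun j e => (X j : A n) ^ e := by
      apply Finsupp.prod_congr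
      intro j hj
      have hji : j ≠ i := by
        intro he; exact (Finsupp.mem_support_iff.1 hj) (he ▸ h)
      rw [Function.update_of_ne hji]
    rw [this, MvPolynomial.algebraMap_eq, ← monomial_eq]
  · have hi : i ∈ m.support := Finsupp.mem_support_iff.2 h
    have : (m.prod fun j e => (Function.update (X : Fin n → A n) i 0 j) ^ e) = 0 := by
      rw [Finsupp.prod]
      apply Finset.prod_eq_zero hi
      rw [Function.update_self]
      exact zero_pow h
    rw [this, mul_zero]

lemma X_dvd_sub_setZero (i : Fin n) (p : A n) : (X i : A n) ∣ p - setZero i p := by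
  induction p using MvPolynomial.induction_on' with
  | monomial u a =>
    rw [setZero_monomial]
    split_ifs with h
    · simp
    · rw [sub_zero]
      rw [X_dvd_monomial]
      exact Or.inr h
  | add p q hp hq =>
    have : p + q - setZero i (p + q) = (p - setZero i p) + (q - setZero i q) := by
      rw [map_add]; ring
    rw [this]
    exact dvd_add hp hq

lemma X_dvd_iff_setZero {i : Fin n} {p : A n} : (X i : A n) ∣ p ↔ setZero i p = 0 := by
  constructor
  · rintro ⟨q, rfl⟩
    rw [map_mul]
    have : setZero i (X i : A n) = 0 := by
      rw [setZero]
      simp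
    rw [this, zero_mul]
  · intro h
    have := X_dvd_sub_setZero i p
    rwa [h, sub_zero] at this

lemma prime_X (i : Fin n) : Prime (X i : A n) := by
  refine ⟨X_ne_zero i, ?_, ?_⟩
  · intro hu
    have h0 : setZero i (X i : A n) = 0 := by rw [setZero]; simp
    have := hu.map (setZero i)
    rw [h0] at this
    exact this.ne_zero rfl
  · intro a b hab
    rw [X_dvd_iff_setZero, map_mul] at hab
    rcases mul_eq_zero.1 hab with h | h
    · exact Or.inl (X_dvd_iff_setZero.2 h)
    · exact Or.inr (X_dvd_iff_setZero.2 h)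

lemma not_X_dvd_of_exists {i : Fin n} {p : A n}
    (hex : ∃ m ∈ p.support, m i = 0) : ¬ (X i : A n) ∣ p := by
  rintro ⟨q, rfl⟩
  obtain ⟨m, hm, hmi⟩ := hex
  rw [support_X_mul] at hm
  obtain ⟨t, _, rfl⟩ := Finset.mem_map.1 hm
  simp [addLeftEmbedding] at hmi

lemma mem_range_of_nonneg {x : R n} (hx : ∀ g ∈ x.coeff.support, ∀ i, 0 ≤ g i) :
    ∃ p : A n, emb n p = x := by
  classical
  refine ⟨∑ g ∈ x.coeff.support, MvPolynomial.monomial (Finsupp.mapRange Int.toNat Int.toNat_zero g) (x.coeff g), ?_⟩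
  rw [map_sum]
  have hcong : ∀ g ∈ x.coeff.support,
      emb n (MvPolynomial.monomial (Finsupp.mapRange Int.toNat Int.toNat_zero g) (x.coeff g))
        = AddMonoidAlgebra.single g (x.coeff g) := by
    intro g hg
    rw [emb_single]
    congr 1
    ext i
    rw [φh_apply, Finsupp.mapRange_apply]
    exact Int.toNat_of_nonneg (hx g hg i)
  rw [Finset.sum_congr rfl hcong]
  have := AddMonoidAlgebra.sum_coeff_single x
  rwa [Finsupp.sum] at this

lemma exists_translate (x : R n) (hx : x ≠ 0) :
    ∃ h : H n, (∃ p : A n, emb n p = x * AddMonoidAlgebra.single h 1) ∧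
      ∀ i, ∃ g ∈ x.coeff.support, g i + h i = 0 := by
  classical
  have hne : x.coeff.support.Nonempty :=
    Finsupp.support_nonempty_iff.2 (mt AddMonoidAlgebra.coeff_eq_zero.1 hx)
  set h : H n := Finsupp.equivFunOnFinite.symm
    (fun i => x.coeff.support.sup' hne fun g => -(g i)) with hdef
  have happ : ∀ i, h i = x.coeff.support.sup' hne fun g => -(g i) := by
    intro i; rw [hdef]; rfl
  have hsupp : (x * AddMonoidAlgebra.single h 1).coeff.support
      = x.coeff.support.map (addRightEmbedding h) :=
    AddMonoidAlgebra.support_coeff_mul_single x 1 (by simp) h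
  refine ⟨h, ?_, ?_⟩
  · apply mem_range_of_nonneg
    intro g' hg' i
    rw [hsupp] at hg'
    obtain ⟨g, hg, rfl⟩ := Finset.mem_map.1 hg'
    have : -(g i) ≤ h i := by
      rw [happ]
      exact Finset.le_sup' (f := fun g => -(g i)) hg
    have h2 : (addRightEmbedding h) g i = g i + h i := rfl
    rw [h2]
    linarith
  · intro i
    obtain ⟨g, hg, hge⟩ := Finset.exists_mem_eq_sup' hne (fun g => -(g i))
    refine ⟨g, hg, ?_⟩
    rw [happ, hge]
    ring

lemma exists_translate' (x : R n) :
    ∃ (m : Fin n →₀ ℕ) (p : A n), emb n p = x * AddMonoidAlgebra.single (φh n m) 1 := by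
  classical
  rcases eq_or_ne x 0 with rfl | hx
  · exact ⟨0, 0, by simp⟩
  have hne : x.coeff.support.Nonempty :=
    Finsupp.support_nonempty_iff.2 (mt AddMonoidAlgebra.coeff_eq_zero.1 hx)
  set m : Fin n →₀ ℕ := Finsupp.equivFunOnFinite.symm
    (fun i => (x.coeff.support.sup' hne fun g => -(g i)).toNat) with hdef
  have happ : ∀ i, (φh n m) i = ((x.coeff.support.sup' hne fun g => -(g i)).toNat : ℤ) := by
    intro i; rw [φh_apply, hdef]; rfl
  refine ⟨m, ?_⟩
  apply mem_range_of_nonneg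
  intro g' hg' i
  have hsupp : (x * AddMonoidAlgebra.single (φh n m) 1).coeff.support
      = x.coeff.support.map (addRightEmbedding (φh n m)) :=
    AddMonoidAlgebra.support_coeff_mul_single x 1 (by simp) _
  rw [hsupp] at hg'
  obtain ⟨g, hg, rfl⟩ := Finset.mem_map.1 hg'
  have h1 : -(g i) ≤ x.coeff.support.sup' hne fun g => -(g i) :=
    Finset.le_sup' (f := fun g => -(g i)) hg
  have h2 : (x.coeff.support.sup' hne fun g => -(g i))
      ≤ ((x.coeff.support.sup' hne fun g => -(g i)).toNat : ℤ) := Int.self_le_toNat _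
  have h3 : (addRightEmbedding (φh n m)) g i = g i + (φh n m) i := rfl
  rw [h3, happ]
  linarith

lemma single_unit (h : H n) : IsUnit (AddMonoidAlgebra.single h (1:ℤ) : R n) :=
  isUnit_iff.2 ⟨h, 1, isUnit_one, rfl⟩

lemma dvd_of_emb_dvd {p w : A n} (hp : Prime p) (hXp : ∀ i, ¬ (X i : A n) ∣ p)
    (hd : emb n p ∣ emb n w) : p ∣ w := by
  obtain ⟨c, hc⟩ := hd
  obtain ⟨m, c', hc'⟩ := exists_translate' c
  have key : emb n (w * MvPolynomial.monomial m 1) = emb n (p * c') := by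
    rw [map_mul, map_mul, emb_single, hc, hc']
    ring
  have heq : w * MvPolynomial.monomial m 1 = p * c' := emb_injective key
  have hdvd : p ∣ w * MvPolynomial.monomial m 1 := ⟨c', heq⟩
  rcases hp.2.2 _ _ hdvd with h | h
  · exact h
  · exfalso
    rw [MvPolynomial.monomial_eq, map_one, one_mul, Finsupp.prod] at h
    rw [Prime.dvd_finset_prod_iff hp _] at h
    obtain ⟨j, _, hdj⟩ := h
    have hdX : p ∣ X j := hp.dvd_of_dvd_pow hdj
    have hassoc : Associated p (X j) :=
      hp.irreducible.associated_of_dvd (prime_X j).irreducible hdX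
    exact hXp j hassoc.symm.dvd

theorem prime_of_irreducible {α : R n} (hα : Irreducible α) : Prime α := by
  have hα0 : α ≠ 0 := fun h => not_irreducible_zero (h ▸ hα)
  obtain ⟨h, ⟨p, hps⟩, hmin⟩ := exists_translate α hα0
  have hu : IsUnit (AddMonoidAlgebra.single h (1:ℤ) : R n) := single_unit h
  have hXp : ∀ i, ¬ (X i : A n) ∣ p := by
    intro i
    apply not_X_dvd_of_exists
    obtain ⟨g, hg, hgi⟩ := hmin i
    have hmem : g + h ∈ (emb n p).coeff.support := by
      rw [hps, AddMonoidAlgebra.support_coeff_mul_single α 1 (by simp) h]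
      exact Finset.mem_map.2 ⟨g, hg, rfl⟩
    rw [support_emb] at hmem
    obtain ⟨m, hm, hme⟩ := Finset.mem_image.1 hmem
    refine ⟨m, hm, ?_⟩
    have h1 : (m i : ℤ) = 0 := by
      rw [← φh_apply, hme]
      exact hgi
    exact_mod_cast h1
  have hinv : (AddMonoidAlgebra.single h (1:ℤ) : R n) * AddMonoidAlgebra.single (-h) 1 = 1 := by
    rw [AddMonoidAlgebra.single_mul_single, add_neg_cancel, mul_one, ← AddMonoidAlgebra.one_def]
  have hpirr : Irreducible p := by
    constructor
    · intro hup
      apply hα.not_isUnit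
      have h1 := hup.map (emb n)
      rw [hps] at h1
      exact isUnit_of_mul_isUnit_left h1
    · intro q r hqr
      have hqr' : emb n q * emb n r = α * AddMonoidAlgebra.single h 1 := by
        rw [← map_mul, ← hqr, hps]
      have h2 : α = emb n q * (emb n r * AddMonoidAlgebra.single (-h) 1) := by
        calc α = α * AddMonoidAlgebra.single h 1 * AddMonoidAlgebra.single (-h) 1 := by
              rw [mul_assoc, hinv, mul_one]
        _ = emb n q * (emb n r * AddMonoidAlgebra.single (-h) 1) := by rw [← hqr']; ring
      have hcases : IsUnit (emb n q) ∨ IsUnit (emb n r) := by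
        rcases hα.isUnit_or_isUnit h2 with h3 | h3
        · exact Or.inl h3
        · exact Or.inr (isUnit_of_mul_isUnit_left h3)
      have main : ∀ s t : A n, p = s * t → IsUnit (emb n s) → IsUnit s := by
        intro s t hst hus
        obtain ⟨h₀, c, hc, he⟩ := isUnit_iff.1 hus
        have hs0 : s ≠ 0 := by
          intro h0
          rw [h0, map_zero] at hus
          exact not_isUnit_zero hus
        obtain ⟨m₀, hm₀⟩ := Finsupp.support_nonempty_iff.2 (mt AddMonoidAlgebra.coeff_eq_zero.1 hs0)
        have hsupp : s.support.image (φh n) = {h₀} := by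
          rw [← support_emb, he, AddMonoidAlgebra.coeff_single]
          exact Finsupp.support_single_ne_zero _ hc.ne_zero
        have hmem : ∀ m ∈ s.support, φh n m = h₀ := by
          intro m hm
          have h5 : φh n m ∈ s.support.image (φh n) := Finset.mem_image_of_mem _ hm
          rw [hsupp] at h5
          exact Finset.mem_singleton.1 h5
        have hsub : s.support ⊆ {m₀} := by
          intro m hm
          rw [Finset.mem_singleton]
          apply φh_injective
          rw [hmem m hm, hmem m₀ hm₀]
        have hse : s = MvPolynomial.monomial m₀ (MvPolynomial.coeff m₀ s) := by
          rw [← MvPolynomial.single_eq_monomial]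
          exact AddMonoidAlgebra.coeff_injective (Finsupp.support_subset_singleton.1 hsub)
        have hcu : IsUnit (MvPolynomial.coeff m₀ s) := by
          have h1 : emb n s = AddMonoidAlgebra.single (φh n m₀) (MvPolynomial.coeff m₀ s) := by
            rw [hse, emb_single, ← hse]
          rw [he, hmem m₀ hm₀] at h1
          have h2 : c = MvPolynomial.coeff m₀ s := by
            have := congrArg (fun f : R n => f.coeff h₀) h1
            simpa using this
          rwa [← h2]
        by_cases hm0 : m₀ = 0
        · subst hm0
          rw [hse, MvPolynomial.monomial_zero']
          exact hcu.map (MvPolynomial.C : ℤ →+* A n)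
        · exfalso
          have hex : ∃ i, m₀ i ≠ 0 := by
            by_contra hco
            push_neg at hco
            exact hm0 (Finsupp.ext hco)
          obtain ⟨i, hi⟩ := hex
          apply hXp i
          have h1 : (X i : A n) ∣ s := by
            rw [hse]
            exact MvPolynomial.X_dvd_monomial.2 (Or.inr hi)
          exact h1.trans ⟨t, hst⟩
      rcases hcases with h3 | h3
      · exact Or.inl (main q r hqr h3)
      · exact Or.inr (main r q (by rw [hqr]; ring) h3)
  have hpprime : Prime p := UniqueFactorizationMonoid.irreducible_iff_prime.1 hpirr
  refine ⟨hα0, hα.not_isUnit, ?_⟩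
  intro y z hyz
  obtain ⟨my, py, hpy⟩ := exists_translate' y
  obtain ⟨mz, pz, hpz⟩ := exists_translate' z
  have hd : emb n p ∣ emb n (py * pz) := by
    rw [map_mul, hpy, hpz, hps]
    have h1 : α * AddMonoidAlgebra.single h 1
        ∣ (y * z) * (AddMonoidAlgebra.single (φh n my) 1 * AddMonoidAlgebra.single (φh n mz) 1) :=
      mul_dvd_mul hyz (hu.dvd)
    have h2 : (y * AddMonoidAlgebra.single (φh n my) 1) * (z * AddMonoidAlgebra.single (φh n mz) 1)
        = (y * z) * (AddMonoidAlgebra.single (φh n my) 1 * AddMonoidAlgebra.single (φh n mz) 1) := by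
      ring
    rw [h2]
    exact h1
  have hppz := dvd_of_emb_dvd hpprime hXp hd
  have hαep : α ∣ emb n p := by
    rw [hps]
    exact dvd_mul_right _ _
  rcases hpprime.2.2 _ _ hppz with h1 | h1
  · left
    have h2 : α ∣ y * AddMonoidAlgebra.single (φh n my) 1 := by
      rw [← hpy]
      exact hαep.trans (map_dvd (emb n) h1)
    exact ((single_unit _).dvd_mul_right).1 h2
  · right
    have h2 : α ∣ z * AddMonoidAlgebra.single (φh n mz) 1 := by
      rw [← hpz]
      exact hαep.trans (map_dvd (emb n) h1)
    exact ((single_unit _).dvd_mul_right).1 h2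

lemma list_prod_eq {M : Type*} [CommMonoid M] (α β : M) :
    ∀ l : List M, (∀ y ∈ l, y = α ∨ y = β) →
      ∃ i j, i + j = l.length ∧ l.prod = α ^ i * β ^ j := by
  intro l
  induction l with
  | nil => exact fun _ => ⟨0, 0, rfl, by simp⟩
  | cons y t ih =>
    intro hy
    obtain ⟨i, j, hij, hp⟩ := ih (fun z hz => hy z (List.mem_cons_of_mem _ hz))
    rcases hy y List.mem_cons_self with rfl | rfl
    · refine ⟨i + 1, j, by simp [← hij]; omega, ?_⟩
      rw [List.prod_cons, hp, pow_succ, ← mul_assoc, mul_comm y (y ^ i)]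
    · refine ⟨i, j + 1, by simp [← hij]; omega, ?_⟩
      rw [List.prod_cons, hp, pow_succ, mul_comm y _, mul_assoc]

end GammaAux

/-- **Computation of `Γ` for the identity automorphism.**  For irreducible `α` and
nonzero `x`, with `a` the multiplicity of `α` in `x` and `b` the multiplicity of
`ᾱ` in `x`:  if `α` and `ᾱ` are not associates then `Γ_{α,id}(x) = a + b`, and if
they are associates then `Γ_{α,id}(x) = a`. -/
theorem gamma_id_eq_multiplicities {n : ℕ} (α : R n) (hα : Irreducible α)
    (x : R n) (hx : x ≠ 0) (a b : ℕ)
    (ha : IsGreatest {k : ℕ | α ^ k ∣ x} a)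
    (hb : IsGreatest {k : ℕ | (conjC n α) ^ k ∣ x} b) :
    (¬ Associated α (conjC n α) → Gamma α 1 x = a + b) ∧
    (Associated α (conjC n α) → Gamma α 1 x = a) := by
  set β := conjC n α with hβ
  have hβirr : Irreducible β := (MulEquiv.irreducible_iff (conjC n)).2 hα
  have hone : ∀ (m : ℤ) (z : R n), ((1 : RingAut (R n)) ^ m) z = z := by
    intro m z
    rw [one_zpow]
    rfl
  have hset : ∀ N : ℕ, N ∈ GammaSet α 1 x ↔ ∃ i j, i + j = N ∧ α ^ i * β ^ j ∣ x := by
    intro N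
    constructor
    · rintro ⟨l, rfl, hl, hdvd⟩
      have hl' : ∀ y ∈ l, y = α ∨ y = β := by
        intro y hy
        obtain ⟨m, hm⟩ := hl y hy
        rcases hm with h | h
        · left; rw [h, hone]
        · right; rw [h, hone]
      obtain ⟨i, j, hij, hp⟩ := GammaAux.list_prod_eq α β l hl'
      exact ⟨i, j, hij, hp ▸ hdvd⟩
    · rintro ⟨i, j, hij, hd⟩
      refine ⟨List.replicate i α ++ List.replicate j β, by simp [hij], ?_, ?_⟩
      · intro y hy
        rcases List.mem_append.1 hy with h | h
        · exact ⟨0, Or.inl (by rw [List.eq_of_mem_replicate h, hone])⟩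
        · exact ⟨0, Or.inr (by rw [List.eq_of_mem_replicate h, hone])⟩
      · rw [List.prod_append, List.prod_replicate, List.prod_replicate]
        exact hd
  constructor
  · intro hne
    have hβprime : Prime β := GammaAux.prime_of_irreducible hβirr
    have key : α ^ a * β ^ b ∣ x := by
      obtain ⟨y, hy⟩ := ha.1
      have hbd : β ^ b ∣ α ^ a * y := hy ▸ hb.1
      have hnd : ¬ β ∣ α ^ a := by
        intro hdd
        have h1 : β ∣ α := hβprime.dvd_of_dvd_pow hdd
        exact hne ((hβirr.associated_of_dvd hα h1).symm)
      have h2 : β ^ b ∣ y := hβprime.pow_dvd_of_dvd_mul_left b hnd hbd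
      rw [hy]
      exact mul_dvd_mul (dvd_refl _) h2
    have hgr : IsGreatest (GammaSet α 1 x) (a + b) := by
      constructor
      · exact (hset (a + b)).2 ⟨a, b, rfl, key⟩
      · intro N hN
        obtain ⟨i, j, hij, hd⟩ := (hset N).1 hN
        have hi : i ≤ a := ha.2 (dvd_trans (Dvd.intro _ rfl) hd)
        have hj : j ≤ b := hb.2 (dvd_trans (Dvd.intro_left _ rfl) hd)
        omega
    exact hgr.csSup_eq
  · intro hassoc
    have hgr : IsGreatest (GammaSet α 1 x) a := by
      constructor
      · exact (hset a).2 ⟨a, 0, by omega, by simpa using ha.1⟩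
      · intro N hN
        obtain ⟨i, j, hij, hd⟩ := (hset N).1 hN
        have h1 : Associated (α ^ N) (α ^ i * β ^ j) := by
          rw [← hij, pow_add]
          exact Associated.mul_left _ (hassoc.pow_pow)
        have h2 : α ^ N ∣ x := h1.dvd.trans hd
        exact ha.2 h2
    exact hgr.csSup_eq
end
end
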